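/- There exists a universal constant C > 0 with the following property. Fix ε ∈ (0, 1/2), δ ∈ [0, 1), and A ∈ ℝ^{m×n}. If M(x) = Ax + z is an additive noise mechanism with noise z having finite second moments that is (ε,δ)-differentially private, then for every x ∈ ℝ^n and every θ ∈ ℝ^m, √(Var[θᵀM(x)]) ≥ (1 − δ') · w_{AB₁^n}(θ) / (C ε), where δ' = (e^{1/2} − 1) δ / (e^ε − 1). -/

import Mathlib

open MeasureTheory Matrix
open scoped ENNReal

noncomputable section

namespace DPPaper

variable {ι κ : Type*}

/-- Two inputs `x, x' : ι → ℝ` are neighboring if `‖x - x'‖₁ ≤ 1`. -/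
def Neighboring [Fintype ι] (x x' : ι → ℝ) : Prop :=
  ∑ i, |x i - x' i| ≤ 1

/-- A mechanism `M` (a map from inputs to probability measures on an output space `Ω`)
is `(ε,δ)`-differentially private if for all neighboring inputs and all measurable sets `S`,
`M x S ≤ e^ε · M x' S + δ`. -/
def IsDP [Fintype ι] {Ω : Type*} [MeasurableSpace Ω]
    (M : (ι → ℝ) → Measure Ω) (ε δ : ℝ) : Prop :=
  ∀ x x' : ι → ℝ, Neighboring x x' → ∀ S : Set Ω, MeasurableSet S →
    M x S ≤ ENNReal.ofReal (Real.exp ε) * M x' S + ENNReal.ofReal δ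

/-- The `ℓ_p^p`-error of a mechanism `M` on the query matrix `A`:
`sup_x (E_{Y ~ M x} [ ‖Y - A x‖_p^p ])^{1/p}`, valued in `ℝ≥0∞`. -/
def errLp [Fintype ι] [Fintype κ] (M : (ι → ℝ) → Measure (κ → ℝ))
    (A : Matrix κ ι ℝ) (p : ℝ) : ℝ≥0∞ :=
  ⨆ x : ι → ℝ,
    (∫⁻ y, ENNReal.ofReal (∑ i, |y i - A.mulVec x i| ^ p) ∂(M x)) ^ (1 / p)

/-- The `q`-trace of a square matrix: `(∑ i, U i i ^ q)^{1/q}`. -/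
def trq [Fintype κ] (q : ℝ) (U : Matrix κ κ ℝ) : ℝ :=
  (∑ i, (U i i) ^ q) ^ (1 / q)

/-- The `1 → 2` operator norm of a matrix: the largest `ℓ₂`-norm of a column. -/
def norm12 [Fintype ι] [Fintype κ] (R : Matrix κ ι ℝ) : ℝ :=
  ⨆ j : ι, Real.sqrt (∑ i, (R i j) ^ 2)

/-- The factorization norm `γ_{(p)}(A)`. -/
def gammaP [Fintype ι] [Fintype κ] (p : ℝ) (A : Matrix κ ι ℝ) : ℝ :=
  sInf { c : ℝ | ∃ (k : ℕ) (L : Matrix κ (Fin k) ℝ) (R : Matrix (Fin k) ι ℝ),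
    L * R = A ∧ c = Real.sqrt (trq (p / 2) (L * Lᵀ)) * norm12 R }

/-- The Schatten-1 norm of a matrix: the trace of the PSD square root of `Aᵀ * A`,
i.e. the sum of the singular values of `A`. -/
def schatten1 [Fintype ι] [Fintype κ] [DecidableEq ι] (A : Matrix κ ι ℝ) : ℝ :=
  ((Matrix.posSemidef_conjTranspose_mul_self A).1.eigenvectorUnitary.1 *
    Matrix.diagonal ((RCLike.ofReal : ℝ → ℝ) ∘ (√·) ∘ (Matrix.posSemidef_conjTranspose_mul_self A).1.eigenvalues) *
    (star (Matrix.posSemidef_conjTranspose_mul_self A).1.eigenvectorUnitary : Matrix ι ι ℝ)).trace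

/-- The sensitivity polytope `A B₁^n = {A x : ‖x‖₁ ≤ 1}`. -/
def sensPolytope [Fintype ι] (A : Matrix κ ι ℝ) : Set (κ → ℝ) :=
  {v | ∃ x : ι → ℝ, (∑ i, |x i|) ≤ 1 ∧ v = A.mulVec x}

/-- The width of a set `K` in direction `θ`. -/
def width [Fintype κ] (K : Set (κ → ℝ)) (θ : κ → ℝ) : ℝ :=
  sSup ((fun v => ∑ i, θ i * v i) '' K) - sInf ((fun v => ∑ i, θ i * v i) '' K)

/-- `κ(A)`: the minimal width of the sensitivity polytope over all unit directions. -/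
def kappa [Fintype ι] [Fintype κ] (A : Matrix κ ι ℝ) : ℝ :=
  sInf { c : ℝ | ∃ θ : κ → ℝ, (∑ i, (θ i) ^ 2) = 1 ∧ c = width (sensPolytope A) θ }

/-- The prefix-sum (continual counting) matrix: lower-triangular all ones. -/
def Aprefix (n : ℕ) : Matrix (Fin n) (Fin n) ℝ :=
  fun i j => if j ≤ i then 1 else 0

/-- The covariance matrix of a measure on `κ → ℝ`. -/
def covMatrix [Fintype κ] (μ : Measure (κ → ℝ)) : Matrix κ κ ℝ :=
  fun i j => ∫ y, (y i - ∫ y', y' i ∂μ) * (y j - ∫ y', y' j ∂μ) ∂μ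

/-- The parity query matrix `Q_{d,w}`: rows indexed by `w`-element subsets `P` of `{1,…,d}`,
columns indexed by points of `{-1,1}^d` (encoded as `Fin d → Bool`), entry `∏_{i ∈ P} x_i`. -/
def parityMatrix (d w : ℕ) : Matrix {P : Finset (Fin d) // P.card = w} (Fin d → Bool) ℝ :=
  fun P b => ∏ i ∈ P.1, (if b i then (1 : ℝ) else -1)

/-- The Hadamard matrices: `H_0 = [1]`, `H_{d+1} = [[H_d, H_d], [H_d, -H_d]]`. -/
def Hadamard : (d : ℕ) → Matrix (Fin (2 ^ d)) (Fin (2 ^ d)) ℝ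
  | 0 => fun _ _ => 1
  | (d + 1) =>
    Matrix.reindex
      (finSumFinEquiv.trans (finCongr (by rw [pow_succ, mul_two])))
      (finSumFinEquiv.trans (finCongr (by rw [pow_succ, mul_two])))
      (Matrix.fromBlocks (Hadamard d) (Hadamard d) (Hadamard d) (-(Hadamard d)))

end DPPaper

open DPPaper


lemma abs_le_one_add_sq (x : ℝ) : |x| ≤ 1 + x ^ 2 := by
  nlinarith [abs_nonneg x, sq_abs x, sq_nonneg (|x| - 1)]

lemma integrable_coord {m : ℕ} (ν : Measure (Fin m → ℝ)) [IsProbabilityMeasure ν]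
    (h : ∀ i, Integrable (fun w => (w i) ^ 2) ν) (i : Fin m) :
    Integrable (fun w : Fin m → ℝ => w i) ν := by
  refine Integrable.mono ((integrable_const 1).add (h i)) (measurable_pi_apply i).aestronglyMeasurable ?_
  filter_upwards with w
  have := abs_le_one_add_sq (w i)
  have h2 : (0:ℝ) ≤ 1 + (w i)^2 := by positivity
  simpa [abs_of_nonneg h2] using this

lemma integrable_coord_mul {m : ℕ} (ν : Measure (Fin m → ℝ)) [IsProbabilityMeasure ν]
    (h : ∀ i, Integrable (fun w => (w i) ^ 2) ν) (i j : Fin m) :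
    Integrable (fun w : Fin m → ℝ => w i * w j) ν := by
  refine Integrable.mono ((h i).add (h j))
    ((measurable_pi_apply i).mul (measurable_pi_apply j)).aestronglyMeasurable ?_
  filter_upwards with w
  have h2 : (0:ℝ) ≤ (w i)^2 + (w j)^2 := by positivity
  simp only [Pi.add_apply]
  rw [Real.norm_eq_abs, Real.norm_eq_abs, abs_of_nonneg h2, abs_mul]
  nlinarith [sq_abs (w i), sq_abs (w j), sq_nonneg (|w i| - |w j|), abs_nonneg (w i), abs_nonneg (w j)]

lemma integrable_lin {m : ℕ} (ν : Measure (Fin m → ℝ)) [IsProbabilityMeasure ν]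
    (h : ∀ i, Integrable (fun w => (w i) ^ 2) ν) (θ : Fin m → ℝ) (c : ℝ) :
    Integrable (fun w : Fin m → ℝ => c + ∑ i, θ i * w i) ν := by
  exact (integrable_const c).add (integrable_finset_sum _ (fun i _ => (integrable_coord ν h i).const_mul (θ i)))

lemma integrable_sq_affine {m : ℕ} (ν : Measure (Fin m → ℝ)) [IsProbabilityMeasure ν]
    (h : ∀ i, Integrable (fun w => (w i) ^ 2) ν) (θ : Fin m → ℝ) (c : ℝ) :
    Integrable (fun w : Fin m → ℝ => (c + ∑ i, θ i * w i) ^ 2) ν := by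
  have key : (fun w : Fin m → ℝ => (c + ∑ i, θ i * w i) ^ 2)
      = fun w => (c^2 + (∑ i, (2*c*θ i) * w i)) + ∑ i, ∑ j, (θ i * θ j) * (w i * w j) := by
    funext w
    have hS : (∑ i, θ i * w i) * (∑ j, θ j * w j) = ∑ i, ∑ j, (θ i * θ j) * (w i * w j) := by
      rw [Finset.sum_mul_sum]
      exact Finset.sum_congr rfl fun i _ => Finset.sum_congr rfl fun j _ => by ring
    have : (c + ∑ i, θ i * w i) ^ 2
        = c^2 + (∑ i, 2*c*(θ i * w i)) + (∑ i, θ i * w i) * (∑ j, θ j * w j) := by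
      rw [← Finset.mul_sum]; ring
    rw [this, hS]
    congr 2
    exact Finset.sum_congr rfl fun i _ => by ring
  rw [key]
  refine Integrable.add (Integrable.add (integrable_const _) ?_) ?_
  · exact integrable_finset_sum _ (fun i _ => (integrable_coord ν h i).const_mul _)
  · exact integrable_finset_sum _ (fun i _ =>
      integrable_finset_sum _ (fun j _ => (integrable_coord_mul ν h i j).const_mul _))

lemma chebyshev_aux {α : Type*} [MeasurableSpace α] (ν : Measure α) [IsProbabilityMeasure ν]
    (Z : α → ℝ) (hZm : Measurable Z) (μ₀ c : ℝ) (hc : 0 < c)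
    (hint : Integrable (fun w => (Z w - μ₀) ^ 2) ν) :
    (ν {w | c ≤ |Z w - μ₀|}).toReal ≤ (∫ w, (Z w - μ₀) ^ 2 ∂ν) / c ^ 2 := by
  set V := ∫ w, (Z w - μ₀) ^ 2 ∂ν with hV
  have hVnn : 0 ≤ V := integral_nonneg fun w => sq_nonneg _
  have hlin : ENNReal.ofReal V = ∫⁻ w, ENNReal.ofReal ((Z w - μ₀) ^ 2) ∂ν :=
    ofReal_integral_eq_lintegral_ofReal hint (Filter.Eventually.of_forall fun w => sq_nonneg _)
  have hmeas : Measurable fun w => ENNReal.ofReal ((Z w - μ₀) ^ 2) :=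
    (((hZm.sub measurable_const).pow_const 2)).ennreal_ofReal
  have hkey := mul_meas_ge_le_lintegral₀ (μ := ν) hmeas.aemeasurable (ENNReal.ofReal (c ^ 2))
  rw [← hlin] at hkey
  have hset : {w | ENNReal.ofReal (c ^ 2) ≤ ENNReal.ofReal ((Z w - μ₀) ^ 2)}
      = {w | c ≤ |Z w - μ₀|} := by
    ext w
    simp only [Set.mem_setOf_eq, ENNReal.ofReal_le_ofReal_iff (sq_nonneg (Z w - μ₀))]
    constructor <;> intro hx <;> nlinarith [abs_nonneg (Z w - μ₀), sq_abs (Z w - μ₀), hc.le]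
  rw [hset] at hkey
  have hfin1 : ENNReal.ofReal (c ^ 2) * ν {w | c ≤ |Z w - μ₀|} ≠ ⊤ :=
    ENNReal.mul_ne_top ENNReal.ofReal_ne_top (measure_ne_top ν _)
  have := (ENNReal.toReal_le_toReal hfin1 ENNReal.ofReal_ne_top).2 hkey
  rw [ENNReal.toReal_mul, ENNReal.toReal_ofReal (by positivity : (0:ℝ) ≤ c^2),
    ENNReal.toReal_ofReal hVnn] at this
  rw [le_div_iff₀ (by positivity : (0:ℝ) < c^2)]
  linarith [this]

section WidthLemmas

variable {m n : ℕ} (A : Matrix (Fin m) (Fin n) ℝ) (θ : Fin m → ℝ)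

lemma f_mulVec (v : Fin n → ℝ) :
    (∑ i, θ i * A.mulVec v i) = ∑ j, v j * (∑ i, θ i * A i j) := by
  simp only [Matrix.mulVec, dotProduct, Finset.mul_sum, Finset.sum_mul]
  rw [Finset.sum_comm]
  exact Finset.sum_congr rfl fun j _ => Finset.sum_congr rfl fun i _ => by ring

/-- there is a bound `a ≥ 0` on `|θᵀv|` over the sensitivity polytope, which is either `0`
or attained by a direction `d` with `‖d‖₁ = 1`. -/
lemma exists_width_bound :
    ∃ a : ℝ, 0 ≤ a ∧ (∀ v ∈ sensPolytope A, |∑ i, θ i * v i| ≤ a) ∧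
      (a = 0 ∨ ∃ d : Fin n → ℝ, (∑ j, |d j|) = 1 ∧ (∑ i, θ i * A.mulVec d i) = a) := by
  by_cases hn : Nonempty (Fin n)
  · obtain ⟨j0, _, hj0⟩ := Finset.exists_max_image Finset.univ
      (fun j => |∑ i, θ i * A i j|) ⟨Classical.arbitrary _, Finset.mem_univ _⟩
    refine ⟨|∑ i, θ i * A i j0|, abs_nonneg _, ?_, Or.inr ?_⟩
    · rintro v ⟨y, hy1, rfl⟩
      rw [f_mulVec]
      calc |∑ j, y j * (∑ i, θ i * A i j)| ≤ ∑ j, |y j * (∑ i, θ i * A i j)| :=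
            Finset.abs_sum_le_sum_abs _ _
        _ ≤ ∑ j, |y j| * |∑ i, θ i * A i j0| := by
            refine Finset.sum_le_sum fun j _ => ?_
            rw [abs_mul]
            exact mul_le_mul_of_nonneg_left (hj0 j (Finset.mem_univ j)) (abs_nonneg _)
        _ = (∑ j, |y j|) * |∑ i, θ i * A i j0| := (Finset.sum_mul _ _ _).symm
        _ ≤ 1 * |∑ i, θ i * A i j0| := mul_le_mul_of_nonneg_right hy1 (abs_nonneg _)
        _ = _ := one_mul _
    · refine ⟨Pi.single j0 (if 0 ≤ (∑ i, θ i * A i j0) then (1:ℝ) else -1), ?_, ?_⟩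
      · rw [Finset.sum_eq_single j0]
        · split <;> simp
        · intro b _ hb; simp [Pi.single_apply, hb]
        · simp
      · rw [f_mulVec, Finset.sum_eq_single j0]
        · rw [Pi.single_eq_same]
          split <;> rename_i h
          · rw [abs_of_nonneg h]; ring
          · rw [abs_of_neg (lt_of_not_ge h)]; ring
        · intro b _ hb; simp [Pi.single_apply, hb]
        · simp
  · refine ⟨0, le_refl _, ?_, Or.inl rfl⟩
    rintro v ⟨y, _, rfl⟩
    rw [f_mulVec]
    haveI : IsEmpty (Fin n) := not_nonempty_iff.1 hn
    simp

lemma width_le_bound {a : ℝ} (ha : 0 ≤ a)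
    (hb : ∀ v ∈ sensPolytope A, |∑ i, θ i * v i| ≤ a) :
    0 ≤ width (sensPolytope A) θ ∧ width (sensPolytope A) θ ≤ 2 * a := by
  have hmem0 : (0:ℝ) ∈ (fun v => ∑ i, θ i * v i) '' sensPolytope A := by
    refine ⟨0, ⟨0, by simp, by simp⟩, by simp⟩
  have hub : ∀ y ∈ (fun v => ∑ i, θ i * v i) '' sensPolytope A, y ≤ a := by
    rintro y ⟨v, hv, rfl⟩; exact (abs_le.1 (hb v hv)).2
  have hlb : ∀ y ∈ (fun v => ∑ i, θ i * v i) '' sensPolytope A, -a ≤ y := by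
    rintro y ⟨v, hv, rfl⟩; exact (abs_le.1 (hb v hv)).1
  have hba : BddAbove ((fun v => ∑ i, θ i * v i) '' sensPolytope A) := ⟨a, hub⟩
  have hbb : BddBelow ((fun v => ∑ i, θ i * v i) '' sensPolytope A) := ⟨-a, hlb⟩
  constructor
  · have h1 := le_csSup hba hmem0
    have h2 := csInf_le hbb hmem0
    unfold width; linarith
  · have h1 := Real.sSup_le hub ha
    have h2 := le_csInf ⟨0, hmem0⟩ hlb
    unfold width; linarith
end WidthLemmas

set_option maxHeartbeats 1000000 in
/-- for an (ε,δ)-DP additive noise mechanism in the high privacy regime,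
  every one-dimensional marginal has standard deviation ≳ (1-δ')·w_{AB₁ⁿ}(θ)/ε. -/
theorem marginal_variance_lower_bound :
    ∃ C : ℝ, 0 < C ∧
      ∀ (m n : ℕ) (ε δ : ℝ), 0 < ε → ε < 1 / 2 → 0 ≤ δ → δ < 1 →
        ∀ (A : Matrix (Fin m) (Fin n) ℝ) (ν : Measure (Fin m → ℝ)),
          IsProbabilityMeasure ν → (∀ i, Integrable (fun w => (w i) ^ 2) ν) →
          IsDP (fun x => Measure.map (fun w => A.mulVec x + w) ν) ε δ →
          ∀ (x : Fin n → ℝ) (θ : Fin m → ℝ),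
            Real.sqrt (∫ y, ((∑ i, θ i * y i) -
                ∫ y', ∑ i, θ i * y' i ∂(Measure.map (fun w => A.mulVec x + w) ν)) ^ 2
                ∂(Measure.map (fun w => A.mulVec x + w) ν))
              ≥ (1 - (Real.exp (1 / 2) - 1) * δ / (Real.exp ε - 1))
                  * width (sensPolytope A) θ / (C * ε) := by
  refine ⟨40, by norm_num, ?_⟩
  intro m n ε δ hε hε2 hδ0 hδ1 A ν hprob hint hDP x θ
  haveI := hprob
  set μ : Measure (Fin m → ℝ) := Measure.map (fun w => A.mulVec x + w) ν with hμ
  set δ' : ℝ := (Real.exp (1 / 2) - 1) * δ / (Real.exp ε - 1) with hδ'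
  set W : ℝ := width (sensPolytope A) θ with hW
  -- basic measurability
  have hfmeas : Measurable fun y : Fin m → ℝ => ∑ i, θ i * y i :=
    Finset.measurable_sum _ fun i _ => (by fun_prop : Measurable fun y : Fin m → ℝ => θ i * y i)
  have hshift : ∀ v : Fin n → ℝ, Measurable fun w : Fin m → ℝ => A.mulVec v + w :=
    fun v => measurable_const.add measurable_id
  set Z : (Fin m → ℝ) → ℝ := fun w => ∑ i, θ i * (A.mulVec x + w) i with hZ
  have hZmeas : Measurable Z := hfmeas.comp (hshift x)
  set μ₀ : ℝ := ∫ y', ∑ i, θ i * y' i ∂μ with hμ₀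
  set V : ℝ := ∫ w, (Z w - μ₀) ^ 2 ∂ν with hV
  have hVnn : 0 ≤ V := integral_nonneg fun w => sq_nonneg _
  -- the goal's integral equals V
  have hgoal : (∫ y, ((∑ i, θ i * y i) - μ₀) ^ 2 ∂μ) = V := by
    rw [hμ, integral_map (f := fun y : Fin m → ℝ => ((∑ i, θ i * y i) - μ₀) ^ 2)
      (hshift x).aemeasurable
      (((hfmeas.sub measurable_const).pow_const 2).aestronglyMeasurable)]
  rw [hgoal]
  have hσnn : 0 ≤ Real.sqrt V := Real.sqrt_nonneg _
  -- Z is an affine function of w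
  have hZaff : ∀ w, Z w = (∑ i, θ i * A.mulVec x i) + ∑ i, θ i * w i := by
    intro w
    simp only [hZ, Pi.add_apply, mul_add, Finset.sum_add_distrib]
  have hintV : Integrable (fun w => (Z w - μ₀) ^ 2) ν := by
    have h := integrable_sq_affine ν hint θ ((∑ i, θ i * A.mulVec x i) - μ₀)
    refine h.congr (Filter.Eventually.of_forall fun w => ?_)
    simp only [hZaff]; ring
  -- exponential facts
  have hexpε : 1 < Real.exp ε := by
    rw [← Real.exp_zero]; exact Real.exp_lt_exp.2 hε
  have hE1 : 1 < Real.exp (1/2 : ℝ) := by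
    rw [← Real.exp_zero]; exact Real.exp_lt_exp.2 (by norm_num)
  have hE2 : Real.exp (1/2 : ℝ) < 2 := by
    have h := Real.exp_one_lt_d9
    have h2 : Real.exp (1/2 : ℝ) ^ 2 = Real.exp 1 := by
      rw [← Real.exp_nat_mul]; norm_num
    nlinarith [Real.exp_pos (1/2 : ℝ)]
  have hδ'0 : 0 ≤ δ' := by
    apply div_nonneg (mul_nonneg (by linarith) hδ0) (by linarith)
  -- trivial cases
  by_cases hδ'1 : 1 ≤ δ'
  · apply le_trans _ hσnn
    apply div_nonpos_of_nonpos_of_nonneg _ (by linarith)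
    obtain ⟨a, ha0, hbd, _⟩ := exists_width_bound A θ
    have := (width_le_bound A θ ha0 hbd).1
    nlinarith
  push_neg at hδ'1
  obtain ⟨a, ha0, hbd, hach⟩ := exists_width_bound A θ
  obtain ⟨hW0, hWle⟩ := width_le_bound A θ ha0 hbd
  by_cases hWpos : W ≤ 0
  · apply le_trans _ hσnn
    apply div_nonpos_of_nonpos_of_nonneg _ (by linarith)
    nlinarith
  push_neg at hWpos
  have hapos : 0 < a := by nlinarith
  obtain ⟨d, hd1, hda⟩ := hach.resolve_left (by positivity)
  -- choice of k
  set k : ℕ := Nat.floor ((2*ε)⁻¹) with hk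
  have hk1 : 1 ≤ k := by
    apply Nat.le_floor
    rw [Nat.cast_one, le_inv_comm₀ one_pos (by positivity), inv_one]
    linarith
  have hkε : (k:ℝ) * ε ≤ 1/2 := by
    have h1 : (k:ℝ) ≤ (2*ε)⁻¹ := Nat.floor_le (by positivity)
    have h2 : (2*ε)⁻¹ * ε = 1/2 := by field_simp
    nlinarith
  have h4εk : 1 ≤ 4*ε*(k:ℝ) := by
    have h2 : (2*ε)⁻¹ < (k:ℝ) + 1 := Nat.lt_floor_add_one _
    have h3 : (k:ℝ) + 1 ≤ 2*(k:ℝ) := by exact_mod_cast by omega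
    have h4 : (2*ε)⁻¹ < 2*(k:ℝ) := lt_of_lt_of_le h2 h3
    rw [inv_lt_iff_one_lt_mul₀ (by positivity)] at h4
    nlinarith
  -- group privacy
  have hGP : ∀ S : Set ℝ, MeasurableSet S →
      (ν {w | Z w ∈ S}).toReal ≤
        Real.exp (1/2 : ℝ) * (ν {w | Z w + (k:ℝ)*a ∈ S}).toReal + δ' := by
    intro S hS
    set p : ℕ → ℝ≥0∞ := fun i => ν {w | Z w + (i:ℝ)*a ∈ S} with hp
    have haff : ∀ (c : ℝ) (w : Fin m → ℝ),
        (∑ i, θ i * (A.mulVec (x + c • d) + w) i) = Z w + c * a := by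
      intro c w
      have h1 : A.mulVec (x + c • d) = A.mulVec x + c • A.mulVec d := by
        rw [Matrix.mulVec_add, Matrix.mulVec_smul]
      rw [h1]
      have h2 : ∀ i, θ i * ((A.mulVec x + c • A.mulVec d) + w) i
          = θ i * (A.mulVec x + w) i + c * (θ i * A.mulVec d i) := by
        intro i; simp only [Pi.add_apply, Pi.smul_apply, smul_eq_mul]; ring
      rw [Finset.sum_congr rfl fun i _ => h2 i, Finset.sum_add_distrib, ← Finset.mul_sum, hda]
    have hmap : ∀ (v : Fin n → ℝ),
        Measure.map (fun w => A.mulVec v + w) ν ((fun y => ∑ i, θ i * y i) ⁻¹' S)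
          = ν {w | (∑ i, θ i * (A.mulVec v + w) i) ∈ S} := by
      intro v
      rw [Measure.map_apply (hshift v) (hfmeas hS)]
      rfl
    have hstep : ∀ i : ℕ, p i ≤ ENNReal.ofReal (Real.exp ε) * p (i+1) + ENNReal.ofReal δ := by
      intro i
      have hnb : Neighboring (x + (i:ℝ) • d) (x + ((i:ℝ)+1) • d) := by
        unfold Neighboring
        have h5 : ∀ j, |(x + (i:ℝ) • d) j - (x + ((i:ℝ)+1) • d) j| = |d j| := by
          intro j
          simp only [Pi.add_apply, Pi.smul_apply, smul_eq_mul]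
          rw [show x j + (i:ℝ) * d j - (x j + ((i:ℝ)+1) * d j) = -(d j) by ring, abs_neg]
        rw [Finset.sum_congr rfl fun j _ => h5 j, hd1]
      have hd := hDP (x + (i:ℝ) • d) (x + ((i:ℝ)+1) • d) hnb
        ((fun y => ∑ i, θ i * y i) ⁻¹' S) (hfmeas hS)
      simp only [hmap] at hd
      have e1 : {w | (∑ j, θ j * (A.mulVec (x + (i:ℝ) • d) + w) j) ∈ S}
          = {w | Z w + (i:ℝ)*a ∈ S} := Set.ext fun w => by rw [Set.mem_setOf_eq, haff]; rfl
      have e2 : {w | (∑ j, θ j * (A.mulVec (x + ((i:ℝ)+1) • d) + w) j) ∈ S}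
          = {w | Z w + ((i+1:ℕ):ℝ)*a ∈ S} := Set.ext fun w => by
        rw [Set.mem_setOf_eq, haff]; push_cast; rfl
      rw [e1, e2] at hd
      exact hd
    set E : ℝ≥0∞ := ENNReal.ofReal (Real.exp ε) with hE
    set D : ℝ≥0∞ := ENNReal.ofReal δ with hD
    have hind : ∀ i : ℕ, p 0 ≤ E^i * p i + D * ∑ l ∈ Finset.range i, E^l := by
      intro i
      induction i with
      | zero => simp
      | succ i ih =>
        calc p 0 ≤ E^i * p i + D * ∑ l ∈ Finset.range i, E^l := ih
          _ ≤ E^i * (E * p (i+1) + D) + D * ∑ l ∈ Finset.range i, E^l :=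
            add_le_add_left (mul_le_mul_right (hstep i) _) _
          _ = E^(i+1) * p (i+1) + D * ∑ l ∈ Finset.range (i+1), E^l := by
            rw [Finset.sum_range_succ]; ring
    have hkey := hind k
    -- convert coefficients
    have hEk : E^k = ENNReal.ofReal (Real.exp ((k:ℝ)*ε)) := by
      rw [hE, ← ENNReal.ofReal_pow (Real.exp_nonneg _), ← Real.exp_nat_mul]
    have hDs : D * ∑ l ∈ Finset.range k, E^l
        = ENNReal.ofReal (δ * ∑ l ∈ Finset.range k, (Real.exp ε)^l) := by
      rw [ENNReal.ofReal_mul hδ0, ENNReal.ofReal_sum_of_nonneg (fun l _ => by positivity), hD, hE]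
      congr 1
      exact Finset.sum_congr rfl fun l _ => (ENNReal.ofReal_pow (Real.exp_nonneg _) l).symm
    have hδsum : δ * ∑ l ∈ Finset.range k, (Real.exp ε)^l ≤ δ' := by
      rw [geom_sum_eq (by linarith) k, ← Real.exp_nat_mul, hδ', ← mul_div_assoc,
        div_le_div_iff₀ (by linarith) (by linarith)]
      have h1 : Real.exp ((k:ℝ)*ε) ≤ Real.exp (1/2:ℝ) := Real.exp_le_exp.2 hkε
      have h2 : δ * (Real.exp ((k:ℝ)*ε) - 1) ≤ δ * (Real.exp (1/2:ℝ) - 1) :=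
        mul_le_mul_of_nonneg_left (by linarith) hδ0
      have h3 : δ * (Real.exp ((k:ℝ)*ε) - 1) * (Real.exp ε - 1)
          ≤ δ * (Real.exp (1/2:ℝ) - 1) * (Real.exp ε - 1) :=
        mul_le_mul_of_nonneg_right h2 (by linarith)
      nlinarith [h3]
    have hkey2 : p 0 ≤ ENNReal.ofReal (Real.exp (1/2:ℝ)) * p k + ENNReal.ofReal δ' := by
      rw [hEk, hDs] at hkey
      exact le_trans hkey (add_le_add
        (mul_le_mul_left (ENNReal.ofReal_le_ofReal (Real.exp_le_exp.2 hkε)) _)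
        (ENNReal.ofReal_le_ofReal hδsum))
    have hfin : ENNReal.ofReal (Real.exp (1/2:ℝ)) * p k + ENNReal.ofReal δ' ≠ ⊤ :=
      ENNReal.add_ne_top.2 ⟨ENNReal.mul_ne_top ENNReal.ofReal_ne_top (measure_ne_top ν _),
        ENNReal.ofReal_ne_top⟩
    have hreal := (ENNReal.toReal_le_toReal (measure_ne_top ν _) hfin).2 hkey2
    rw [ENNReal.toReal_add (ENNReal.mul_ne_top ENNReal.ofReal_ne_top (measure_ne_top ν _))
      ENNReal.ofReal_ne_top, ENNReal.toReal_mul, ENNReal.toReal_ofReal (Real.exp_nonneg _),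
      ENNReal.toReal_ofReal hδ'0] at hreal
    simp only [Nat.cast_zero, zero_mul, add_zero] at hreal
    exact hreal
  -- anti-concentration
  set t : ℝ := Real.sqrt (2*(1 + Real.exp (1/2 : ℝ))/(1-δ')) with ht
  have htpos : 0 < t := Real.sqrt_pos.2 (div_pos (by positivity) (by linarith))
  have ht2 : t^2 = 2*(1 + Real.exp (1/2 : ℝ))/(1-δ') :=
    Real.sq_sqrt (le_of_lt (div_pos (by positivity) (by linarith)))
  have hka : (k:ℝ) * a ≤ 2 * t * Real.sqrt V := by
    by_contra hcon
    push_neg at hcon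
    set c : ℝ := (k:ℝ)*a/2 with hc
    have hσ2 : Real.sqrt V ^ 2 = V := Real.sq_sqrt hVnn
    have htσc : t * Real.sqrt V < c := by rw [hc]; nlinarith
    have hcpos : 0 < c := lt_of_le_of_lt (by positivity) htσc
    have hcheb := chebyshev_aux ν Z hZmeas μ₀ c hcpos hintV
    have hVc : V / c^2 ≤ 1/t^2 := by
      rw [div_le_div_iff₀ (by positivity) (by positivity)]
      nlinarith [mul_nonneg htpos.le hσnn]
    have hScheb := hGP (Set.Ioo (μ₀ - c) (μ₀ + c)) measurableSet_Ioo
    have hcover : (Set.univ : Set (Fin m → ℝ)) ⊆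
        {w | Z w ∈ Set.Ioo (μ₀ - c) (μ₀ + c)} ∪ {w | c ≤ |Z w - μ₀|} := by
      intro w _
      by_cases h : c ≤ |Z w - μ₀|
      · exact Or.inr h
      · push_neg at h
        rw [abs_lt] at h
        exact Or.inl ⟨by linarith [h.1], by linarith [h.2]⟩
    have hlow : 1 - 1/t^2 ≤ (ν {w | Z w ∈ Set.Ioo (μ₀ - c) (μ₀ + c)}).toReal := by
      have h1 : (1:ℝ≥0∞) ≤ ν {w | Z w ∈ Set.Ioo (μ₀ - c) (μ₀ + c)} + ν {w | c ≤ |Z w - μ₀|} := by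
        calc (1:ℝ≥0∞) = ν Set.univ := (measure_univ).symm
          _ ≤ _ := le_trans (measure_mono hcover) (measure_union_le _ _)
      have h2 := (ENNReal.toReal_le_toReal (by norm_num)
        (ENNReal.add_ne_top.2 ⟨measure_ne_top ν _, measure_ne_top ν _⟩)).2 h1
      rw [ENNReal.toReal_add (measure_ne_top ν _) (measure_ne_top ν _)] at h2
      simp only [ENNReal.toReal_one] at h2
      linarith [le_trans hcheb hVc]
    have hhigh : (ν {w | Z w + (k:ℝ)*a ∈ Set.Ioo (μ₀ - c) (μ₀ + c)}).toReal ≤ 1/t^2 := by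
      have hsub : {w | Z w + (k:ℝ)*a ∈ Set.Ioo (μ₀ - c) (μ₀ + c)} ⊆ {w | c ≤ |Z w - μ₀|} := by
        intro w hw
        obtain ⟨h1, h2⟩ := hw
        have hka2 : (k:ℝ)*a = 2*c := by rw [hc]; ring
        have h3 : Z w - μ₀ < -c := by rw [hka2] at h2; linarith
        rw [Set.mem_setOf_eq, abs_sub_comm, abs_of_pos (by linarith)]
        linarith
      refine le_trans ?_ (le_trans hcheb hVc)
      exact (ENNReal.toReal_le_toReal (measure_ne_top ν _) (measure_ne_top ν _)).2
        (measure_mono hsub)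
    have hcontra : 1 - 1/t^2 ≤ Real.exp (1/2 : ℝ) * (1/t^2) + δ' := by
      refine le_trans hlow (le_trans hScheb ?_)
      have h6 := mul_le_mul_of_nonneg_left hhigh (Real.exp_nonneg (1/2 : ℝ))
      linarith
    have h1t : 1/t^2 = (1-δ')/(2*(1 + Real.exp (1/2 : ℝ))) := by
      rw [ht2, one_div_div]
    rw [h1t] at hcontra
    have hEpos : (0:ℝ) < 1 + Real.exp (1/2 : ℝ) := by positivity
    have h7 : (0:ℝ) < 1 - δ' := by linarith
    have hgen : ∀ u e : ℝ, 0 < 1 + e → u/(2*(1+e)) + e*(u/(2*(1+e))) = u/2 := by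
      intro u e he; field_simp
    have hrval := hgen (1-δ') (Real.exp (1/2:ℝ)) (by positivity)
    linarith
  -- conclude
  have htd : t * (1 - δ') ≤ 5/2 := by
    have h1 : (t * (1-δ'))^2 = t^2 * (1-δ')^2 := by ring
    have hgen2 : ∀ u e : ℝ, u ≠ 0 → (2*(1+e)/u) * u^2 = 2*(1+e)*u := by
      intro u e hu; field_simp
    have h2 : t^2 * (1-δ')^2 = 2*(1 + Real.exp (1/2 : ℝ))*(1-δ') := by
      rw [ht2]; exact hgen2 _ _ (by linarith)
    have h3 : (t * (1-δ'))^2 ≤ 6 := by rw [h1, h2]; nlinarith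
    nlinarith [mul_nonneg htpos.le (by linarith : (0:ℝ) ≤ 1 - δ')]
  rw [ge_iff_le, div_le_iff₀ (by positivity)]
  have s2 : (1-δ') * (2*t*Real.sqrt V) ≤ 5 * Real.sqrt V := by
    have h6 := mul_le_mul_of_nonneg_left htd (by positivity : (0:ℝ) ≤ 2*Real.sqrt V)
    nlinarith
  have s1 : (1-δ') * ((k:ℝ)*a) ≤ (1-δ') * (2*t*Real.sqrt V) :=
    mul_le_mul_of_nonneg_left hka (by linarith)
  have s3 : (1-δ') * a ≤ (1-δ') * a * (4*ε*(k:ℝ)) := by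
    nlinarith [mul_pos (by linarith : (0:ℝ) < 1-δ') hapos]
  have s6 : 4*ε*((1-δ') * ((k:ℝ)*a)) ≤ 4*ε*((1-δ') * (2*t*Real.sqrt V)) :=
    mul_le_mul_of_nonneg_left s1 (by positivity)
  have s7 : 4*ε*((1-δ') * (2*t*Real.sqrt V)) ≤ 4*ε*(5*Real.sqrt V) :=
    mul_le_mul_of_nonneg_left s2 (by positivity)
  have s8 : (1-δ') * W ≤ (1-δ') * (2*a) := mul_le_mul_of_nonneg_left hWle (by linarith)
  nlinarith [s3, s6, s7, s8]
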